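/- arXiv:math/9807189 — 3 statements merged into one kernel-verified Lean document; each statement's English description precedes it below -/
import Mathlib

section
/- Let G be a Lie group and let (Γ_n) be a sequence of discrete subgroups of G that converges geometrically to a closed subgroup Γ of G. Suppose that the identity component Γ₀ of Γ (the connected component of the identity in Γ with its subspace topology) is compact and nontrivial (contains more than one element). Then the sequence (Γ_n) has unbounded torsion: for every positive integer N there exist an index n and an element γ ∈ Γ_n of finite order strictly greater than N. -/
open Set Filter Topology Manifold Pointwise

section PowInj

private noncomputable def cleSmul {E : Type*} [NormedAddCommGroup E] [NormedSpace ℝ E] (c : ℝ) (hc : c ≠ 0) :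
    E ≃L[ℝ] E where
  toFun x := c • x
  invFun x := c⁻¹ • x
  map_add' x y := smul_add c x y
  map_smul' r x := smul_comm c r x
  left_inv x := by simp [smul_smul, inv_mul_cancel₀ hc]
  right_inv x := by simp [smul_smul, mul_inv_cancel₀ hc]
  continuous_toFun := continuous_const_smul c
  continuous_invFun := continuous_const_smul c⁻¹

theorem eventually_pow_eq_one_imp
    {E : Type*} [NormedAddCommGroup E] [NormedSpace ℝ E] [FiniteDimensional ℝ E]
    {G : Type*} [TopologicalSpace G] [ChartedSpace E G] [Group G]
    [IsTopologicalGroup G] [LieGroup 𝓘(ℝ, E) (⊤ : ℕ∞) G] (m : ℕ) (hm : m ≠ 0) :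
    ∀ᶠ x in 𝓝 (1 : G), x ^ m = 1 → x = 1 := by
  have h1src : (1 : G) ∈ (extChartAt 𝓘(ℝ, E) (1 : G)).source := mem_extChartAt_source (1 : G)
  set φ := extChartAt 𝓘(ℝ, E) (1 : G) with hφdef
  set v₀ : E := φ 1 with hv₀
  have hsymm1 : φ.symm v₀ = 1 := extChartAt_to_inv (1 : G)
  set g : ℕ → E → E := fun k v => φ ((φ.symm v) ^ k) with hgdef
  set μ : E × E → E := fun p => φ (φ.symm p.1 * φ.symm p.2) with hμdef
  have hφc : ContinuousAt φ 1 := continuousAt_extChartAt (1 : G)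
  have hφsc : ContinuousAt φ.symm v₀ := continuousAt_extChartAt_symm (1 : G)
  have hsrc_nhds : φ.source ∈ 𝓝 (1 : G) := extChartAt_source_mem_nhds (1 : G)
  have htgt_nhds : φ.target ∈ 𝓝 v₀ := extChartAt_target_mem_nhds (1 : G)
  -- smoothness of μ
  have hμ : ContDiffAt ℝ (↑(⊤ : ℕ∞)) μ (v₀, v₀) := by
    have h := (contMDiff_mul 𝓘(ℝ, E) (G := G) (n := ((⊤ : ℕ∞) : WithTop ℕ∞))).contMDiffAt (x := ((1 : G), (1 : G)))
    rw [contMDiffAt_iff] at h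
    obtain ⟨-, h⟩ := h
    rw [ModelWithCorners.range_eq_univ, contDiffWithinAt_univ] at h
    have heq : (extChartAt 𝓘(ℝ, E) ((1 : G) * (1 : G)) ∘ (fun p : G × G => p.1 * p.2) ∘
        (extChartAt (𝓘(ℝ, E).prod 𝓘(ℝ, E)) ((1 : G), (1 : G))).symm) = μ := by
      funext p
      simp only [Function.comp_apply, extChartAt_prod, PartialEquiv.prod_symm,
        PartialEquiv.prod_coe, PartialEquiv.prod_coe_symm, hμdef, one_mul]
      rfl
    have hpt : extChartAt (𝓘(ℝ, E).prod 𝓘(ℝ, E)) ((1 : G), (1 : G)) ((1 : G), (1 : G))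
        = (v₀, v₀) := by
      simp [extChartAt_prod, hv₀, hφdef]
    rw [heq, hpt] at h
    exact h
  obtain ⟨D, hD⟩ : ∃ D, HasFDerivAt μ D (v₀, v₀) :=
    ⟨_, (hμ.differentiableAt (by simp)).hasFDerivAt⟩
  -- partial derivatives of μ are the identity
  have hmul_left : (μ ∘ fun a => (a, v₀)) =ᶠ[𝓝 v₀] _root_.id := by
    filter_upwards [htgt_nhds] with a ha
    simp only [Function.comp_apply, hμdef, hsymm1, mul_one, _root_.id]
    exact φ.right_inv ha
  have hmul_right : (μ ∘ fun b => (v₀, b)) =ᶠ[𝓝 v₀] _root_.id := by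
    filter_upwards [htgt_nhds] with b hb
    simp only [Function.comp_apply, hμdef, hsymm1, one_mul, _root_.id]
    exact φ.right_inv hb
  have hDinl : D.comp (ContinuousLinearMap.inl ℝ E E) = ContinuousLinearMap.id ℝ E := by
    have h1 : HasFDerivAt (μ ∘ fun a => (a, v₀)) (D.comp (ContinuousLinearMap.inl ℝ E E)) v₀ :=
      HasFDerivAt.comp (f := fun a : E => (a, v₀)) v₀ hD (hasFDerivAt_prodMk_left (𝕜 := ℝ) v₀ v₀)
    have h2 : HasFDerivAt (μ ∘ fun a => (a, v₀)) (ContinuousLinearMap.id ℝ E) v₀ :=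
      (hasFDerivAt_id v₀).congr_of_eventuallyEq hmul_left
    exact h1.unique h2
  have hDinr : D.comp (ContinuousLinearMap.inr ℝ E E) = ContinuousLinearMap.id ℝ E := by
    have h1 : HasFDerivAt (μ ∘ fun b => (v₀, b)) (D.comp (ContinuousLinearMap.inr ℝ E E)) v₀ :=
      HasFDerivAt.comp (f := fun b : E => (v₀, b)) v₀ hD (hasFDerivAt_prodMk_right (𝕜 := ℝ) v₀ v₀)
    have h2 : HasFDerivAt (μ ∘ fun b => (v₀, b)) (ContinuousLinearMap.id ℝ E) v₀ :=
      (hasFDerivAt_id v₀).congr_of_eventuallyEq hmul_right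
    exact h1.unique h2
  have hDapply : ∀ x y : E, D (x, y) = x + y := by
    intro x y
    have : (x, y) = (ContinuousLinearMap.inl ℝ E E) x + (ContinuousLinearMap.inr ℝ E E) y := by
      simp
    rw [this, map_add, ← ContinuousLinearMap.comp_apply, ← ContinuousLinearMap.comp_apply,
      hDinl, hDinr]
    simp
  -- the symm-powers eventually stay in the source
  have hpow_mem : ∀ k : ℕ, ∀ᶠ v in 𝓝 v₀, (φ.symm v) ^ k ∈ φ.source := by
    intro k
    have hc : ContinuousAt (fun v => (φ.symm v) ^ k) v₀ := by
      exact (continuousAt_pow _ k).comp (by simpa [hsymm1] using hφsc)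
    have : (φ.symm v₀) ^ k ∈ φ.source := by simp [hsymm1, h1src]
    exact hc.eventually_mem ((isOpen_extChartAt_source (1 : G)).mem_nhds this)
  -- derivative of g k
  have hgd : ∀ k : ℕ, HasFDerivAt (g k) ((k : ℝ) • ContinuousLinearMap.id ℝ E) v₀ := by
    intro k
    induction k with
    | zero =>
      have : g 0 = fun _ => v₀ := by funext v; simp [hgdef, hv₀]
      rw [this]
      simpa using hasFDerivAt_const v₀ v₀
    | succ k ih =>
      have heq : (μ ∘ fun v => (g k v, v)) =ᶠ[𝓝 v₀] g (k + 1) := by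
        filter_upwards [hpow_mem k] with v hv
        simp only [Function.comp_apply, hμdef, hgdef]
        rw [φ.left_inv hv, pow_succ]
      have hgk0 : g k v₀ = v₀ := by show φ (φ.symm v₀ ^ k) = v₀; rw [hsymm1, one_pow, ← hv₀]
      have hpair : HasFDerivAt (fun v => (g k v, v))
          (((k : ℝ) • ContinuousLinearMap.id ℝ E).prod (ContinuousLinearMap.id ℝ E)) v₀ :=
        HasFDerivAt.prodMk ih (hasFDerivAt_id v₀)
      have hD' : HasFDerivAt μ D (g k v₀, v₀) := by rw [hgk0]; exact hD
      have hcomp : HasFDerivAt (μ ∘ fun v => (g k v, v))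
          (D.comp ((((k : ℝ) • ContinuousLinearMap.id ℝ E)).prod
            (ContinuousLinearMap.id ℝ E))) v₀ := HasFDerivAt.comp (f := fun v => (g k v, v)) v₀ hD' hpair
      have hfinal : HasFDerivAt (g (k + 1))
          (D.comp ((((k : ℝ) • ContinuousLinearMap.id ℝ E)).prod
            (ContinuousLinearMap.id ℝ E))) v₀ := hcomp.congr_of_eventuallyEq heq.symm
      have hCLM : D.comp ((((k : ℝ) • ContinuousLinearMap.id ℝ E)).prod
          (ContinuousLinearMap.id ℝ E)) = ((k + 1 : ℕ) : ℝ) • ContinuousLinearMap.id ℝ E := by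
        ext x
        simp only [ContinuousLinearMap.comp_apply, ContinuousLinearMap.prod_apply,
          ContinuousLinearMap.smul_apply, ContinuousLinearMap.id_apply, ContinuousLinearMap.coe_id']
        rw [hDapply]
        push_cast
        rw [add_smul, one_smul]
      rwa [hCLM] at hfinal
  -- strict derivative and local inverse
  have hgm : ContDiffAt ℝ (↑(⊤ : ℕ∞)) (g m) v₀ := by
    have h := (contMDiff_pow (I := 𝓘(ℝ, E)) (G := G) (n := ((⊤ : ℕ∞) : WithTop ℕ∞)) m).contMDiffAt (x := (1 : G))
    rw [contMDiffAt_iff] at h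
    obtain ⟨-, h⟩ := h
    rw [ModelWithCorners.range_eq_univ, contDiffWithinAt_univ] at h
    have heq : (extChartAt 𝓘(ℝ, E) ((1 : G) ^ m) ∘ (fun a : G => a ^ m) ∘
        (extChartAt 𝓘(ℝ, E) (1 : G)).symm) = g m := by
      funext v
      simp only [Function.comp_apply, one_pow, hgdef]
      rfl
    rwa [heq] at h
  have hmne : ((m : ℝ)) ≠ 0 := Nat.cast_ne_zero.mpr hm
  set e : E ≃L[ℝ] E := cleSmul (m : ℝ) hmne with hedef
  have hecoe : (e : E →L[ℝ] E) = (m : ℝ) • ContinuousLinearMap.id ℝ E := by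
    ext x; rfl
  have hde : HasFDerivAt (g m) (e : E →L[ℝ] E) v₀ := by rw [hecoe]; exact hgd m
  have hstrict : HasStrictFDerivAt (g m) (e : E →L[ℝ] E) v₀ :=
    hgm.hasStrictFDerivAt' hde (by simp)
  have hleft := hstrict.eventually_left_inverse
  have hgm_v₀ : g m v₀ = v₀ := by show φ (φ.symm v₀ ^ m) = v₀; rw [hsymm1, one_pow, ← hv₀]
  have hlv₀ : hstrict.localInverse (g m) e v₀ v₀ = v₀ := by
    have := hstrict.localInverse_apply_image
    rwa [hgm_v₀] at this
  -- pull everything back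
  have hSnhds : {v | hstrict.localInverse (g m) e v₀ (g m v) = v} ∈ 𝓝 v₀ := hleft
  have hU : φ.source ∩ φ ⁻¹' {v | hstrict.localInverse (g m) e v₀ (g m v) = v} ∈ 𝓝 (1 : G) := by
    refine Filter.inter_mem hsrc_nhds ?_
    exact hφc.preimage_mem_nhds (by rw [← hv₀]; exact hSnhds)
  filter_upwards [hU] with x hx hxm
  obtain ⟨hxsrc, hxS⟩ := hx
  have hgx : g m (φ x) = v₀ := by
    simp only [hgdef]
    rw [φ.left_inv hxsrc, hxm, ← hv₀]
  have : φ x = v₀ := by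
    have h' : HasStrictFDerivAt.localInverse (g m) e v₀ hstrict (g m (φ x)) = φ x := hxS
    rw [hgx] at h'
    exact h'.symm.trans hlv₀
  exact φ.injOn hxsrc h1src (by rw [this, hv₀])

end PowInj


private theorem exists_isClopen_superset_connectedComponent {X : Type*} [TopologicalSpace X]
    [T2Space X] [CompactSpace X] (x : X) {U : Set X} (hU : IsOpen U)
    (hsub : connectedComponent x ⊆ U) :
    ∃ V : Set X, IsClopen V ∧ connectedComponent x ⊆ V ∧ V ⊆ U := by
  let N := { s : Set X // IsClopen s ∧ x ∈ s }
  haveI : Nonempty N := ⟨⟨Set.univ, isClopen_univ, Set.mem_univ x⟩⟩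
  have hdir : Directed (· ⊇ ·) fun s : N => (s : Set X) := by
    rintro ⟨s, hs, hxs⟩ ⟨t, ht, hxt⟩
    exact ⟨⟨s ∩ t, hs.inter ht, ⟨hxs, hxt⟩⟩, Set.inter_subset_left, Set.inter_subset_right⟩
  have hiInter : ⋂ s : N, (s : Set X) = connectedComponent x :=
    (connectedComponent_eq_iInter_isClopen x).symm
  have h_nhd : ∀ y ∈ ⋂ s : N, (s : Set X), U ∈ 𝓝 y := fun y hy =>
    hU.mem_nhds (hsub (by rwa [hiInter] at hy))
  obtain ⟨s, hsU⟩ := exists_subset_nhds_of_compactSpace hdir (fun s : N => s.2.1.1) h_nhd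
  exact ⟨s, s.2.1, by rw [← hiInter]; exact Set.iInter_subset _ s, hsU⟩

private theorem exists_isCompact_isOpen_superset_connectedComponent {Y : Type*}
    [TopologicalSpace Y] [T2Space Y] [LocallyCompactSpace Y] (y : Y)
    (hc : IsCompact (connectedComponent y)) :
    ∃ F : Set Y, IsCompact F ∧ IsOpen F ∧ connectedComponent y ⊆ F := by
  obtain ⟨L, hLc, hLint, -⟩ := exists_compact_between hc isOpen_univ (Set.subset_univ _)
  haveI : CompactSpace ↥L := isCompact_iff_compactSpace.1 hLc
  have hyL : y ∈ L := interior_subset (hLint mem_connectedComponent)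
  set y' : ↥L := ⟨y, hyL⟩ with hy'def
  have hcompL : connectedComponent y ⊆ L := fun z hz => interior_subset (hLint hz)
  have him : Subtype.val '' connectedComponent y' = connectedComponent y := by
    apply Set.Subset.antisymm
    · have := continuous_subtype_val.image_connectedComponent_subset (a := y')
      simpa using this
    · have hval : Subtype.val '' (Subtype.val ⁻¹' connectedComponent y : Set ↥L)
          = connectedComponent y := by
        rw [Set.image_preimage_eq_inter_range, Subtype.range_coe]
        exact Set.inter_eq_self_of_subset_left hcompL
      have hpre : IsPreconnected (Subtype.val ⁻¹' connectedComponent y : Set ↥L) := by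
        rw [← Topology.IsInducing.subtypeVal.isPreconnected_image, hval]
        exact isPreconnected_connectedComponent
      have hsub' : (Subtype.val ⁻¹' connectedComponent y : Set ↥L) ⊆ connectedComponent y' :=
        hpre.subset_connectedComponent (Set.mem_preimage.2 mem_connectedComponent)
      intro z hz
      have hzL : z ∈ L := hcompL hz
      exact ⟨⟨z, hzL⟩, hsub' (Set.mem_preimage.2 hz), rfl⟩
  obtain ⟨V, hV, hV1, hV2⟩ := exists_isClopen_superset_connectedComponent y'
    (U := (Subtype.val ⁻¹' interior L : Set ↥L))
    (isOpen_interior.preimage continuous_subtype_val)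
    (fun u hu => Set.mem_preimage.2 (hLint (him ▸ Set.mem_image_of_mem _ hu)))
  obtain ⟨u, hu, hVu⟩ := isOpen_induced_iff.1 hV.2
  refine ⟨Subtype.val '' V, (hV.1.isCompact).image continuous_subtype_val, ?_, ?_⟩
  · have heq : Subtype.val '' V = u ∩ interior L := by
      apply Set.Subset.antisymm
      · rintro z ⟨w, hwV, rfl⟩
        exact ⟨by rw [← hVu] at hwV; exact hwV, hV2 hwV⟩
      · rintro z ⟨hzu, hzint⟩
        exact ⟨⟨z, interior_subset hzint⟩, by rw [← hVu]; exact hzu, rfl⟩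
    rw [heq]
    exact hu.inter isOpen_interior
  · rw [← him]; exact Set.image_mono hV1


open scoped Manifold Topology

theorem unbounded_torsion_of_compact_identity_component
    {E : Type*} [NormedAddCommGroup E] [NormedSpace ℝ E] [FiniteDimensional ℝ E]
    {G : Type*} [TopologicalSpace G] [ChartedSpace E G] [Group G]
    [IsTopologicalGroup G] [LieGroup 𝓘(ℝ, E) (⊤ : ℕ∞) G]
    (Γseq : ℕ → Subgroup G)
    (hdisc : ∀ n, DiscreteTopology (Γseq n))
    (Γ : Subgroup G) (hclosed : IsClosed (Γ : Set G))
    -- geometric convergence, condition (1)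
    (hgeo₁ : ∀ nk : ℕ → ℕ, StrictMono nk → ∀ γk : ℕ → G,
      (∀ j, γk j ∈ Γseq (nk j)) → ∀ γ : G,
      Filter.Tendsto γk Filter.atTop (𝓝 γ) → γ ∈ Γ)
    -- geometric convergence, condition (2)
    (hgeo₂ : ∀ γ ∈ Γ, ∃ γs : ℕ → G, (∀ n, γs n ∈ Γseq n) ∧
      Filter.Tendsto γs Filter.atTop (𝓝 γ))
    -- the identity component of `Γ` (in the subspace topology) is compact and nontrivial
    (hcpt : IsCompact (connectedComponent (1 : ↥Γ)))
    (hnontriv : (connectedComponent (1 : ↥Γ)).Nontrivial) :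
    ∀ N : ℕ, 0 < N → ∃ n : ℕ, ∃ γ ∈ Γseq n, IsOfFinOrder γ ∧ N < orderOf γ := by
  classical
  intro N hN
  by_contra hcon
  push_neg at hcon
  -- Hausdorffness of `G`
  haveI hT2 : T2Space G := by
    apply IsTopologicalGroup.t2Space_of_one_sep
    intro x hx
    by_cases hxs : x ∈ (chartAt E (1 : G)).source
    · obtain ⟨u, v, hu, hv, hxu, h1v, huv⟩ :=
        t2_separation (fun h : chartAt E (1 : G) x = chartAt E (1 : G) 1 =>
          hx ((chartAt E (1 : G)).injOn hxs (mem_chart_source E 1) h))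
      refine ⟨(chartAt E (1 : G)).source ∩ (chartAt E (1 : G)) ⁻¹' v, ?_, ?_⟩
      · exact ((chartAt E (1 : G)).isOpen_inter_preimage hv).mem_nhds
          ⟨mem_chart_source E 1, h1v⟩
      · rintro ⟨-, hxv⟩
        exact Set.disjoint_left.1 huv hxu hxv
    · exact ⟨(chartAt E (1 : G)).source,
        (chartAt E (1 : G)).open_source.mem_nhds (mem_chart_source E 1), hxs⟩
  haveI : LocallyCompactSpace G := ChartedSpace.locallyCompactSpace E G
  haveI : FirstCountableTopology G := by
    constructor
    intro x
    have hx : x ∈ (chartAt E x).source := mem_chart_source E x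
    rw [← (chartAt E x).symm_map_nhds_eq hx]
    exact Filter.map.isCountablyGenerated _ _
  haveI : LocallyCompactSpace ↥Γ := hclosed.locallyCompactSpace
  -- a compact open (in `Γ`) neighborhood `F` of the identity component
  obtain ⟨F, hFc, hFo, hF1⟩ := exists_isCompact_isOpen_superset_connectedComponent (1 : ↥Γ) hcpt
  obtain ⟨O, hO, hFO⟩ := isOpen_induced_iff.1 hFo
  set Fimg : Set G := Subtype.val '' F with hFimg
  have hFimgc : IsCompact Fimg := hFc.image continuous_subtype_val
  have hFimgO : Fimg ⊆ O := by rintro z ⟨w, hw, rfl⟩; rw [← hFO] at hw; exact hw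
  have hmemF : ∀ x : G, x ∈ Γ → x ∈ O → x ∈ Fimg := fun x hxΓ hxO =>
    ⟨⟨x, hxΓ⟩, by rw [← hFO]; exact hxO, rfl⟩
  -- an open set `W` squeezed between `F` and `O` with compact closure
  obtain ⟨L₂, hL₂c, hL₂int, hL₂O⟩ := exists_compact_between hFimgc hO hFimgO
  set W : Set G := interior L₂ with hWdef
  have hWo : IsOpen W := isOpen_interior
  have hclWL₂ : closure W ⊆ L₂ := closure_minimal interior_subset hL₂c.isClosed
  have hclWc : IsCompact (closure W) := hL₂c.of_isClosed_subset isClosed_closure hclWL₂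
  have hclWO : closure W ⊆ O := hclWL₂.trans hL₂O
  have hFW : Fimg ⊆ W := hL₂int
  -- a small neighborhood `V` of `1` with compact closure and `closure W * V₂ * V₂ ⊆ O`
  obtain ⟨V₁, hV₁, hV₁O⟩ := compact_open_separated_mul_right hclWc hO hclWO
  obtain ⟨V₂, hV₂o, hV₂1, hV₂V₁⟩ := exists_open_nhds_one_mul_subset hV₁
  obtain ⟨K', hK'nhds, hK'V₂, hK'c⟩ := local_compact_nhds (hV₂o.mem_nhds hV₂1)
  set V : Set G := interior K' with hVdef
  have h1V : (1 : G) ∈ V := mem_interior_iff_mem_nhds.2 hK'nhds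
  have hVnhds : V ∈ 𝓝 (1 : G) := isOpen_interior.mem_nhds h1V
  have hclVK' : closure V ⊆ K' := closure_minimal interior_subset hK'c.isClosed
  have hclVc : IsCompact (closure V) := hK'c.of_isClosed_subset isClosed_closure hclVK'
  have hclVV₂ : closure V ⊆ V₂ := hclVK'.trans hK'V₂
  set Q : Set G := closure W * closure V * closure V with hQdef
  have hQc : IsCompact Q := (hclWc.mul hclVc).mul hclVc
  have hQO : Q ⊆ O := by
    intro z hz
    obtain ⟨wa, hwa, b, hb, rfl⟩ := Set.mem_mul.1 hz
    obtain ⟨w, hw, a, ha, rfl⟩ := Set.mem_mul.1 hwa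
    rw [mul_assoc]
    exact hV₁O (Set.mul_mem_mul hw (hV₂V₁ (Set.mul_mem_mul (hclVV₂ ha) (hclVV₂ hb))))
  -- a neighborhood of `1` with no nontrivial torsion of order at most `N`
  have htor : ∀ᶠ x in 𝓝 (1 : G), ∀ m, 1 ≤ m → m ≤ N → x ^ m = 1 → x = 1 := by
    have h : ∀ m ∈ Finset.Icc 1 N, ∀ᶠ x in 𝓝 (1 : G), x ^ m = 1 → x = 1 := fun m hm =>
      eventually_pow_eq_one_imp (E := E) m (by have := (Finset.mem_Icc.1 hm).1; omega)
    filter_upwards [(Finset.eventually_all (I := Finset.Icc 1 N)).2 h] with x hx m h1m hmN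
    exact hx m (Finset.mem_Icc.2 ⟨h1m, hmN⟩)
  -- `1` is not isolated in the identity component of `Γ`
  have hne : ∀ S ∈ 𝓝 (1 : G), ∃ u : ↥Γ,
      u ∈ connectedComponent (1 : ↥Γ) ∧ (u : G) ∈ S ∧ u ≠ 1 := by
    intro S hS
    by_contra hno
    push_neg at hno
    have h1S : (1 : ↥Γ) ∈ (Subtype.val ⁻¹' interior S : Set ↥Γ) := by
      show ((1 : ↥Γ) : G) ∈ interior S
      rw [OneMemClass.coe_one]
      exact mem_interior_iff_mem_nhds.2 hS
    have hA : IsOpen (Subtype.val ⁻¹' interior S : Set ↥Γ) :=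
      isOpen_interior.preimage continuous_subtype_val
    have hB : IsOpen ({(1 : ↥Γ)}ᶜ : Set ↥Γ) := isOpen_compl_singleton
    obtain ⟨x, hx, y, hy, hxy⟩ := hnontriv
    have hBne : (connectedComponent (1 : ↥Γ) ∩ {(1 : ↥Γ)}ᶜ).Nonempty := by
      rcases eq_or_ne x 1 with rfl | h
      · exact ⟨y, hy, fun h' => hxy (Set.mem_singleton_iff.1 h').symm⟩
      · exact ⟨x, hx, h⟩
    have hAne : (connectedComponent (1 : ↥Γ) ∩ (Subtype.val ⁻¹' interior S)).Nonempty :=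
      ⟨1, mem_connectedComponent, h1S⟩
    have hcover : connectedComponent (1 : ↥Γ) ⊆ (Subtype.val ⁻¹' interior S) ∪ {(1 : ↥Γ)}ᶜ := by
      intro w hw
      rcases eq_or_ne w 1 with rfl | h
      · exact Or.inl h1S
      · exact Or.inr h
    obtain ⟨v, hvcomp, hvA, hvB⟩ :=
      isPreconnected_connectedComponent _ _ hA hB hcover hAne hBne
    exact hvB (hno v hvcomp (interior_subset hvA))
  -- choose a nontrivial element `t` of the component close to `1` without small torsion
  obtain ⟨u, huΓ₀, hu_mem, hu1⟩ := hne (V ∩ {x | ∀ m, 1 ≤ m → m ≤ N → x ^ m = 1 → x = 1})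
    (Filter.inter_mem hVnhds htor)
  obtain ⟨huV, hutor⟩ := hu_mem
  set t : G := (u : G) with htdef
  have ht1 : t ≠ 1 := by
    intro h
    exact hu1 (Subtype.ext (by rw [← htdef, h, OneMemClass.coe_one]))
  have htpow : ∀ m, 1 ≤ m → m ≤ N → t ^ m ≠ 1 := fun m h1 h2 h3 => ht1 (hutor m h1 h2 h3)
  have h1W : (1 : G) ∈ W :=
    hFW ⟨(1 : ↥Γ), hF1 mem_connectedComponent, OneMemClass.coe_one _⟩
  -- approximate `t` by elements of the discrete groups
  obtain ⟨γs, hγsmem, hγs⟩ := hgeo₂ t u.2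
  have hEm : ∀ᶠ n in Filter.atTop, ∀ m, 1 ≤ m → m ≤ N → γs n ^ m ≠ 1 := by
    have h : ∀ m ∈ Finset.Icc 1 N, ∀ᶠ n in Filter.atTop, γs n ^ m ≠ 1 := by
      intro m hm
      have hc : Filter.Tendsto (fun n => γs n ^ m) Filter.atTop (𝓝 (t ^ m)) := hγs.pow m
      exact hc.eventually ((isOpen_ne (x := (1 : G))).eventually_mem
        (htpow m (Finset.mem_Icc.1 hm).1 (Finset.mem_Icc.1 hm).2))
    filter_upwards [(Finset.eventually_all (I := Finset.Icc 1 N)).2 h] with n hn m h1m hmN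
    exact hn m (Finset.mem_Icc.2 ⟨h1m, hmN⟩)
  have hEV : ∀ᶠ n in Filter.atTop, t⁻¹ * γs n ∈ V := by
    have hc : Filter.Tendsto (fun n => t⁻¹ * γs n) Filter.atTop (𝓝 (t⁻¹ * t)) :=
      hγs.const_mul _
    rw [inv_mul_cancel] at hc
    exact hc.eventually (isOpen_interior.eventually_mem h1V)
  obtain ⟨n₀, hn₀⟩ := Filter.eventually_atTop.1 (hEm.and hEV)
  -- every `γs n` eventually has a power escaping `W`
  have hesc : ∀ j : ℕ, ∃ k : ℕ, γs (n₀ + j) ^ k ∉ W := by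
    intro j
    by_contra hall
    push_neg at hall
    have hγΓ : γs (n₀ + j) ∈ Γseq (n₀ + j) := hγsmem _
    obtain ⟨hm, -⟩ := hn₀ (n₀ + j) (Nat.le_add_right _ _)
    haveI := hdisc (n₀ + j)
    have hclosedj : IsClosed ((Γseq (n₀ + j) : Set G)) := Subgroup.isClosed_of_discrete
    have hXc : IsCompact (closure W ∩ (Γseq (n₀ + j) : Set G)) := hclWc.inter_right hclosedj
    haveI : DiscreteTopology ↥(closure W ∩ (Γseq (n₀ + j) : Set G)) :=
      DiscreteTopology.of_subset (hdisc (n₀ + j)) Set.inter_subset_right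
    have hfin : (closure W ∩ (Γseq (n₀ + j) : Set G)).Finite := hXc.finite (isDiscrete_iff_discreteTopology.2 ‹_›)
    have hrange : Set.range (fun k : ℕ => γs (n₀ + j) ^ k)
        ⊆ closure W ∩ (Γseq (n₀ + j) : Set G) := by
      rintro z ⟨k, rfl⟩
      exact ⟨subset_closure (hall k), pow_mem hγΓ k⟩
    have hnotinj : ¬ Function.Injective (fun k : ℕ => γs (n₀ + j) ^ k) := by
      intro hinj
      exact Set.infinite_range_of_injective hinj (hfin.subset hrange)
    rw [Function.not_injective_iff] at hnotinj
    obtain ⟨a, b, hab, hne'⟩ := hnotinj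
    have key : ∀ a b : ℕ, a < b → γs (n₀ + j) ^ a = γs (n₀ + j) ^ b → False := by
      intro a b hlt heq'
      have hpow1 : γs (n₀ + j) ^ (b - a) = 1 := by
        have h1 : γs (n₀ + j) ^ a * γs (n₀ + j) ^ (b - a) = γs (n₀ + j) ^ b := by
          rw [← pow_add]
          congr 1
          omega
        have h2 : γs (n₀ + j) ^ a * γs (n₀ + j) ^ (b - a) = γs (n₀ + j) ^ a * 1 := by
          rw [h1, ← heq', mul_one]
        exact mul_left_cancel h2
      have hfo : IsOfFinOrder (γs (n₀ + j)) :=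
        isOfFinOrder_iff_pow_eq_one.2 ⟨b - a, by omega, hpow1⟩
      have hle := hcon (n₀ + j) (γs (n₀ + j)) hγΓ hfo
      exact hm (orderOf (γs (n₀ + j))) hfo.orderOf_pos hle (pow_orderOf_eq_one _)
    rcases lt_or_gt_of_ne hne' with h | h
    · exact key a b h hab
    · exact key b a h hab.symm
  -- the first escaping powers stay in the compact set `Q` but outside `W`
  set kk : ℕ → ℕ := fun j => Nat.find (hesc j) with hkk
  have hkkspec : ∀ j, γs (n₀ + j) ^ kk j ∉ W := fun j => Nat.find_spec (hesc j)
  have hkkpos : ∀ j, 0 < kk j := by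
    intro j
    rcases Nat.eq_zero_or_pos (kk j) with h | h
    · exact absurd (by rw [h, pow_zero]; exact h1W) (hkkspec j)
    · exact h
  have hkkprev : ∀ j, γs (n₀ + j) ^ (kk j - 1) ∈ W := by
    intro j
    have hlt : kk j - 1 < kk j := by have := hkkpos j; omega
    have := Nat.find_min (hesc j) hlt
    exact not_not.1 this
  set δ : ℕ → G := fun j => γs (n₀ + j) ^ kk j with hδ
  have hδQ : ∀ j, δ j ∈ Q := by
    intro j
    obtain ⟨-, hV'⟩ := hn₀ (n₀ + j) (Nat.le_add_right _ _)
    have hsplit : δ j = γs (n₀ + j) ^ (kk j - 1) * t * (t⁻¹ * γs (n₀ + j)) := by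
      have h1 : kk j - 1 + 1 = kk j := by have := hkkpos j; omega
      calc δ j = γs (n₀ + j) ^ (kk j - 1 + 1) := by rw [h1]
        _ = γs (n₀ + j) ^ (kk j - 1) * γs (n₀ + j) := pow_succ _ _
        _ = γs (n₀ + j) ^ (kk j - 1) * t * (t⁻¹ * γs (n₀ + j)) := by
            rw [mul_assoc, mul_inv_cancel_left]
    rw [hsplit]
    exact Set.mul_mem_mul
      (Set.mul_mem_mul (subset_closure (hkkprev j)) (subset_closure huV))
      (subset_closure hV')
  have hδmem : ∀ j, δ j ∈ Γseq (n₀ + j) := fun j => pow_mem (hγsmem _) _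
  obtain ⟨δlim, hδlimQ, ψ, hψ, hψt⟩ := hQc.tendsto_subseq hδQ
  have hδlimΓ : δlim ∈ Γ := hgeo₁ (fun j => n₀ + ψ j)
    (fun a b h => Nat.add_lt_add_left (hψ h) n₀)
    (fun j => δ (ψ j)) (fun j => hδmem (ψ j)) δlim hψt
  have hδlimW : δlim ∈ W := hFW (hmemF δlim hδlimΓ (hQO hδlimQ))
  have hδlimnW : δlim ∈ Wᶜ :=
    hWo.isClosed_compl.mem_of_tendsto hψt (Filter.Eventually.of_forall fun j => hkkspec (ψ j))
  exact hδlimnW hδlimW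
end

section
/- Let G be a Lie group and let (Γ_n) be a sequence of torsion-free discrete subgroups of G that converges geometrically to a closed subgroup Γ of G. If Γ is discrete, then Γ is torsion-free, i.e. the only element of Γ of finite order is the identity. -/
/-!
STATEMENT 2: Let `G` be a Lie group and `(Γ n)` a sequence of torsion-free discrete
subgroups of `G` converging geometrically to a closed subgroup `Γ`.  If `Γ` is discrete,
then `Γ` is torsion-free: its only element of finite order is the identity.
-/

open scoped Manifold Topology

open Filter Set Pointwise

/-- A charted space over a first-countable model is first countable. -/
theorem chartedSpace_firstCountable (E M : Type*) [TopologicalSpace E] [TopologicalSpace M]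
    [ChartedSpace E M] [FirstCountableTopology E] :
    FirstCountableTopology M := by
  constructor
  intro x
  have h := (chartAt E x).symm_map_nhds_eq (mem_chart_source E x)
  rw [← h]
  exact Filter.map.isCountablyGenerated _ _

theorem geometric_limit_of_torsion_free_is_torsion_free
    {E : Type*} [NormedAddCommGroup E] [NormedSpace ℝ E] [FiniteDimensional ℝ E]
    {G : Type*} [TopologicalSpace G] [ChartedSpace E G] [Group G]
    [IsTopologicalGroup G] [LieGroup 𝓘(ℝ, E) (⊤ : ℕ∞) G]
    (Γseq : ℕ → Subgroup G)
    (hdisc : ∀ n, DiscreteTopology (Γseq n))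
    (htf : ∀ n, ∀ γ ∈ Γseq n, IsOfFinOrder γ → γ = 1)
    (Γ : Subgroup G) (hclosed : IsClosed (Γ : Set G))
    -- geometric convergence, condition (1)
    (hgeo₁ : ∀ nk : ℕ → ℕ, StrictMono nk → ∀ γk : ℕ → G,
      (∀ j, γk j ∈ Γseq (nk j)) → ∀ γ : G,
      Filter.Tendsto γk Filter.atTop (𝓝 γ) → γ ∈ Γ)
    -- geometric convergence, condition (2)
    (hgeo₂ : ∀ γ ∈ Γ, ∃ γs : ℕ → G, (∀ n, γs n ∈ Γseq n) ∧
      Filter.Tendsto γs Filter.atTop (𝓝 γ))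
    (hΓdisc : DiscreteTopology ↥Γ) :
    ∀ γ ∈ Γ, IsOfFinOrder γ → γ = 1 := by
  classical
  -- separation and countability instances
  have ht1 : T1Space G := ChartedSpace.t1Space E G
  have ht2 : T2Space G := inferInstance
  have hlc : LocallyCompactSpace G := ChartedSpace.locallyCompactSpace E G
  have hfc : FirstCountableTopology G := chartedSpace_firstCountable E G
  intro γ hγ hfin
  obtain ⟨γs, hγsmem, hγstend⟩ := hgeo₂ γ hγ
  set k := orderOf γ with hkdef
  have hk : 0 < k := hfin.orderOf_pos
  have hδtend : Tendsto (fun n => γs n ^ k) atTop (𝓝 1) := by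
    have h1 : Tendsto (fun n => γs n ^ k) atTop (𝓝 (γ ^ k)) :=
      ((continuous_pow k).tendsto γ).comp hγstend
    rwa [pow_orderOf_eq_one γ] at h1
  by_cases hA : ∃ᶠ n in atTop, γs n = 1
  · -- a subsequence is constantly 1, so γ = 1 by uniqueness of limits
    obtain ⟨φ, hφ, hφ1⟩ := Filter.extraction_of_frequently_atTop hA
    have h1 : Tendsto (fun j => γs (φ j)) atTop (𝓝 γ) := hγstend.comp hφ.tendsto_atTop
    have h2 : Tendsto (fun j => γs (φ j)) atTop (𝓝 (1 : G)) := by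
      have : (fun j => γs (φ j)) = fun _ => (1 : G) := funext fun j => hφ1 j
      rw [this]; exact tendsto_const_nhds
    exact tendsto_nhds_unique h1 h2
  · exfalso
    have hB : ∀ᶠ n in atTop, γs n ≠ 1 := Filter.not_frequently.mp hA
    -- a neighbourhood of 1 meeting Γ only in 1
    obtain ⟨V, hVopen, hVpre⟩ :=
      isOpen_induced_iff.mp (isOpen_discrete ({1} : Set ↥Γ))
    have h1V : (1 : G) ∈ V := by
      have : (⟨1, Γ.one_mem⟩ : ↥Γ) ∈ Subtype.val ⁻¹' V := by
        rw [hVpre]; rfl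
      exact this
    have hVΓ : ∀ x : G, x ∈ V → x ∈ Γ → x = 1 := by
      intro x hxV hxΓ
      have : (⟨x, hxΓ⟩ : ↥Γ) ∈ Subtype.val ⁻¹' V := hxV
      rw [hVpre] at this
      exact congrArg Subtype.val this
    -- a compact neighbourhood of 1 inside V
    obtain ⟨K, hKnhds, hKV, hKcomp⟩ :=
      local_compact_nhds (x := (1 : G)) (hVopen.mem_nhds h1V)
    -- a small open neighbourhood U of 1 with U * U ⊆ K
    obtain ⟨U, hUopen, h1U, hUU⟩ := exists_open_nhds_one_mul_subset hKnhds
    have hUK : U ⊆ K := by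
      intro u hu
      have : u * 1 ∈ U * U := Set.mul_mem_mul hu h1U
      simpa using hUU this
    -- eventually γs n ≠ 1 and γs n ^ k ∈ U
    have hev : ∀ᶠ n in atTop, γs n ≠ 1 ∧ γs n ^ k ∈ U :=
      hB.and (hδtend.eventually_mem (hUopen.mem_nhds h1U))
    obtain ⟨N, hN⟩ := Filter.eventually_atTop.mp hev
    -- for every n ≥ N, some power of γs n ^ k escapes U while staying in K
    have key : ∀ j : ℕ, ∃ g : G, g ∈ Γseq (N + j) ∧ g ∈ K ∧ g ∉ U := by
      intro j
      set n := N + j with hn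
      obtain ⟨hne, hδU⟩ := hN n (Nat.le_add_right N j)
      set δ := γs n ^ k with hδdef
      have hδΓ : δ ∈ Γseq n := (Γseq n).pow_mem (hγsmem n) k
      have hδinf : ¬ IsOfFinOrder δ := by
        intro hfo
        exact hne (htf n (γs n) (hγsmem n) (hfo.of_pow hk.ne'))
      -- Γseq n is closed, hence its intersection with K is finite
      have hΓclosed : IsClosed ((Γseq n : Set G)) := by
        have := hdisc n
        exact Subgroup.isClosed_of_discrete
      have hSfin : ((Γseq n : Set G) ∩ K).Finite := by
        have hScomp : IsCompact ((Γseq n : Set G) ∩ K) := hKcomp.inter_left hΓclosed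
        have hSdisc : DiscreteTopology ↥((Γseq n : Set G) ∩ K) :=
          DiscreteTopology.of_subset (hdisc n) Set.inter_subset_left
        exact hScomp.finite (isDiscrete_iff_discreteTopology.mpr hSdisc)
      -- some power of δ leaves U
      have hex : ∃ m : ℕ, δ ^ m ∉ U := by
        by_contra hall
        push_neg at hall
        have hinj : Function.Injective (fun m : ℕ => δ ^ m) :=
          injective_pow_iff_not_isOfFinOrder.mpr hδinf
        have : ((Γseq n : Set G) ∩ K).Infinite :=
          Set.infinite_of_injective_forall_mem hinj
            (fun m => ⟨(Γseq n).pow_mem hδΓ m, hUK (hall m)⟩)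
        exact this hSfin
      -- take the minimal escaping power
      set m := Nat.find hex with hmdef
      have hmU : δ ^ m ∉ U := Nat.find_spec hex
      have hm1 : 1 ≤ m := by
        rcases Nat.eq_zero_or_pos m with h0 | h1
        · exfalso; apply hmU; rw [h0, pow_zero]; exact h1U
        · exact h1
      have hprev : δ ^ (m - 1) ∈ U := by
        by_contra h
        exact absurd (Nat.find_min hex (Nat.sub_lt hm1 one_pos)) (fun h' => h' h)
      refine ⟨δ ^ m, (Γseq n).pow_mem hδΓ m, ?_, hmU⟩
      have : δ ^ (m - 1) * δ ∈ U * U := Set.mul_mem_mul hprev hδU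
      rw [pow_sub_one_mul (by omega : m ≠ 0)] at this
      exact hUU this
    choose ε hεΓ hεK hεU using key
    -- extract a convergent subsequence inside the compact set K
    obtain ⟨η, hηK, φ, hφmono, hφtend⟩ := hKcomp.tendsto_subseq hεK
    -- its limit lies in Γ by geometric convergence (condition 1)
    have hnkmono : StrictMono (fun j => N + φ j) := fun a b hab =>
      Nat.add_lt_add_left (hφmono hab) N
    have hηΓ : η ∈ Γ :=
      hgeo₁ (fun j => N + φ j) hnkmono (fun j => ε (φ j)) (fun j => hεΓ (φ j)) η hφtend
    -- but η ∈ K ⊆ V, so η = 1; yet η ∉ U since U's complement is closed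
    have hη1 : η = 1 := hVΓ η (hKV hηK) hηΓ
    have hηU : η ∉ U := by
      have hcl : IsClosed Uᶜ := hUopen.isClosed_compl
      have : η ∈ Uᶜ :=
        hcl.mem_of_tendsto hφtend (Filter.Eventually.of_forall fun j => hεU (φ j))
      exact this
    exact hηU (hη1 ▸ h1U)
end

section
/- Let p : Ñ → N be a covering map between topological manifolds, let B be a compact topological space, and let f : B → Ñ be a continuous map such that the composition p ∘ f : B → N is injective. Then there exists an open set U ⊆ Ñ containing f(B) such that the restriction of p to U is injective; consequently p maps U homeomorphically onto the open subset p(U) of N. -/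
open scoped Topology

theorem covering_injective_on_neighborhood_of_compact
    {E₁ E₂ : Type*} [NormedAddCommGroup E₁] [NormedSpace ℝ E₁] [FiniteDimensional ℝ E₁]
    [NormedAddCommGroup E₂] [NormedSpace ℝ E₂] [FiniteDimensional ℝ E₂]
    {X Y : Type*} [TopologicalSpace X] [TopologicalSpace Y] [T2Space X] [T2Space Y]
    [ChartedSpace E₁ X] [ChartedSpace E₂ Y]
    (p : X → Y) (hp : IsCoveringMap p)
    {B : Type*} [TopologicalSpace B] [CompactSpace B]
    (f : B → X) (hf : Continuous f)
    (hinj : Function.Injective (p ∘ f)) :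
    ∃ U : Set X, IsOpen U ∧ Set.range f ⊆ U ∧ Set.InjOn p U ∧ IsOpen (p '' U) ∧
      ∃ e : U ≃ₜ (p '' U), ∀ x : U, (e x : Y) = p x := by
  have hlh : IsLocalHomeomorph p := hp.isLocalHomeomorph
  have hpc : Continuous p := hp.continuous
  -- p is injective on the compact set `range f`
  have hinj' : Set.InjOn p (Set.range f) := by
    rintro _ ⟨a, rfl⟩ _ ⟨b, rfl⟩ h
    exact congrArg f (hinj h)
  have hsc : IsCompact (Set.range f) := isCompact_range hf
  obtain ⟨U, hUopen, hsU, hUinj⟩ :=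
    hinj'.exists_isOpen_superset hsc (fun x _ ↦ hpc.continuousAt)
      (fun x _ ↦ by
        obtain ⟨u, huopen, hxu, huinj⟩ := hlh.isLocallyInjective x
        exact ⟨u, huopen.mem_nhds hxu, huinj⟩)
  refine ⟨U, hUopen, hsU, hUinj, hlh.isOpenMap U hUopen, ?_⟩
  -- restriction of p to U is a local homeomorphism, injective, hence an embedding
  have hres : IsLocalHomeomorph (U.restrict p) :=
    hlh.comp (hUopen.isOpenEmbedding_subtypeVal.isLocalHomeomorph)
  have hinjres : Function.Injective (U.restrict p) := fun a b h ↦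
    Subtype.ext (hUinj a.2 b.2 h)
  have hemb : Topology.IsOpenEmbedding (U.restrict p) :=
    hres.isOpenEmbedding_of_injective hinjres
  refine ⟨(Topology.IsEmbedding.toHomeomorph hemb.isEmbedding).trans
    (Homeomorph.setCongr (Set.range_restrict p U)), fun x ↦ rfl⟩
end
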